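/- (Kernel remainder estimate) Let n ≥ 3, m ≥ 1 an integer, and let z ∈ ℂ with n−1 < Re z < n. Then for all x, y ∈ ℝⁿ with x ≠ y and y ≠ 0, | |x−y|^{−n+z} − Σ_{j=0}^{m−1} (1/j!) (∂/∂s)^j |sx−y|^{−n+z} |_{s=0} | ≤ C e^{c|Im z|} (|x|/|y|)^{m−1+n−Re z} |x−y|^{−n+Re z}, where C, c depend only on n and m. -/

import Mathlib

open MeasureTheory ENNReal Metric Set Filter
open scoped FourierTransform
noncomputable section

abbrev Euc (n : ℕ) := EuclideanSpace ℝ (Fin n)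

/-- The axis-parallel cube with corner `a` and side length `s`. -/
def cube {n : ℕ} (a : Fin n → ℝ) (s : ℝ) : Set (Euc n) :=
  {x | ∀ i, a i ≤ x i ∧ x i ≤ a i + s}

/-- The Morrey norm `‖V‖_{𝓛^{α,p}} = sup_Q |Q|^{α/n} ((1/|Q|)∫_Q V^p)^{1/p}`. -/
def morrey (n : ℕ) (α p : ℝ) (V : Euc n → ℝ) : ℝ≥0∞ :=
  ⨆ (a : Fin n → ℝ) (s : ℝ) (_ : 0 < s),
    volume (cube a s) ^ (α / n) *
      ((volume (cube a s))⁻¹ * ∫⁻ y in cube a s, ENNReal.ofReal (V y ^ p)) ^ (1 / p)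

open scoped Real NNReal

set_option maxHeartbeats 1600000 in
set_option maxRecDepth 4000 in
lemma kernel_core {n : ℕ} (x y : Euc n) (hx : x ≠ 0) (hy : y ≠ 0) (w : ℂ)
    (hw1 : -1 < w.re) (hw2 : w.re < 0) :
    ∃ a : ℕ → ℂ,
      (∀ j : ℕ, ‖a j‖ ≤ Real.sqrt 2 * Real.exp (π / 2 * |w.im|) * ‖y‖ ^ w.re *
        (4 * ‖x‖ / ‖y‖) ^ j) ∧
      (∀ j : ℕ, iteratedDeriv j (fun s : ℝ => ((‖s • x - y‖ : ℝ) : ℂ) ^ w) 0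
        = (j.factorial : ℂ) * a j) ∧
      (8 * ‖x‖ ≤ ‖y‖ → HasSum a (((‖x - y‖ : ℝ) : ℂ) ^ w)) := by
  set X : ℝ := ‖x‖ with hX
  set Y : ℝ := ‖y‖ with hY
  have hX0 : 0 < X := by simpa [hX] using norm_pos_iff.mpr hx
  have hY0 : 0 < Y := by simpa [hY] using norm_pos_iff.mpr hy
  set R : ℝ := Y / (4 * X) with hR
  have hR0 : 0 < R := by positivity
  set P : ℝ := inner ℝ x y with hP
  set H : ℂ → ℂ := fun ζ => ((X ^ 2 : ℝ) : ℂ) * ζ ^ 2 - ((2 * P : ℝ) : ℂ) * ζ + ((Y ^ 2 : ℝ) : ℂ)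
    with hH
  -- real points of H
  have hHreal : ∀ s : ℝ, H (s : ℂ) = ((‖s • x - y‖ ^ 2 : ℝ) : ℂ) := by
    intro s
    have hnorm : ‖s • x - y‖ ^ 2 = X ^ 2 * s ^ 2 - 2 * P * s + Y ^ 2 := by
      have := norm_sub_sq_real (s • x) y
      rw [norm_smul, real_inner_smul_left] at this
      simp only [Real.norm_eq_abs, mul_pow, _root_.sq_abs] at this
      rw [this]; ring
    rw [hnorm]; push_cast [hH]; ring
  -- lower bound for re on the closed ball
  have hre : ∀ ζ : ℂ, ‖ζ‖ ≤ R → Y ^ 2 / 2 ≤ (H ζ).re := by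
    intro ζ hζ
    have hre' : (H ζ).re = X ^ 2 * (ζ.re * ζ.re - ζ.im * ζ.im) - 2 * P * ζ.re + Y ^ 2 := by
      simp [hH, Complex.add_re, Complex.sub_re, Complex.mul_re, pow_two, Complex.mul_re]
      try ring
    rw [hre']
    have ha : |ζ.re| ≤ R := (Complex.abs_re_le_norm ζ).trans hζ
    have hb : |ζ.im| ≤ R := (Complex.abs_im_le_norm ζ).trans hζ
    have hPa : |P| ≤ X * Y := abs_real_inner_le_norm x y
    have hXR : X * R = Y / 4 := by rw [hR]; field_simp
    nlinarith [sq_nonneg (X * |ζ.re| - Y), abs_nonneg ζ.re, abs_nonneg ζ.im,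
      neg_abs_le ζ.re, le_abs_self ζ.re, neg_abs_le P, le_abs_self P,
      _root_.sq_abs ζ.re, _root_.sq_abs ζ.im, mul_le_mul_of_nonneg_left ha hX0.le,
      mul_le_mul_of_nonneg_left hb hX0.le, sq_nonneg (X * |ζ.im|),
      mul_self_le_mul_self (abs_nonneg ζ.im) hb, mul_self_le_mul_self (abs_nonneg ζ.re) ha,
      mul_pos hX0 hY0, sq_nonneg ζ.im, sq_nonneg ζ.re,
      mul_le_mul (mul_le_mul_of_nonneg_left ha hX0.le) (mul_le_mul_of_nonneg_left hb hX0.le)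
        (by positivity) (by positivity)]
  have habs : ∀ ζ : ℂ, ‖ζ‖ ≤ R → Y ^ 2 / 2 ≤ ‖H ζ‖ :=
    fun ζ hζ => (hre ζ hζ).trans (Complex.re_le_norm _)
  have hslit : ∀ ζ : ℂ, ‖ζ‖ ≤ R → H ζ ∈ Complex.slitPlane := by
    intro ζ hζ
    exact Complex.mem_slitPlane_iff.mpr (Or.inl (lt_of_lt_of_le (by positivity) (hre ζ hζ)))
  set G : ℂ → ℂ := fun ζ => Complex.exp (Complex.log (H ζ) * (w / 2)) with hG
  have hHdiff : ∀ ζ : ℂ, DifferentiableAt ℂ H ζ := by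
    intro ζ
    exact (((differentiableAt_pow 2).const_mul _).sub
      ((differentiableAt_id).const_mul _)).add (differentiableAt_const _)
  have hGdiffAt : ∀ ζ : ℂ, ‖ζ‖ ≤ R → DifferentiableAt ℂ G ζ := by
    intro ζ hζ
    exact (((Complex.differentiableAt_log (hslit ζ hζ)).comp ζ (hHdiff ζ)).mul
      (differentiableAt_const _)).cexp
  -- uniform bound on ‖G‖
  set M : ℝ := Real.sqrt 2 * Real.exp (π / 2 * |w.im|) * Y ^ w.re with hM
  have hM0 : 0 < M := by
    have : (0:ℝ) < Real.sqrt 2 := by positivity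
    positivity
  have hGbound : ∀ ζ : ℂ, ‖ζ‖ ≤ R → ‖G ζ‖ ≤ M := by
    intro ζ hζ
    have h2 : (0:ℝ) < Y ^ 2 / 2 := by positivity
    have habs' := habs ζ hζ
    rw [hG]
    simp only [Complex.norm_exp]
    have hre_eq : (Complex.log (H ζ) * (w / 2)).re
        = Real.log ‖H ζ‖ * (w.re / 2) - (H ζ).arg * (w.im / 2) := by
      simp [Complex.mul_re, Complex.log_re, Complex.log_im, Complex.div_re, Complex.div_im]
      try ring
    rw [hre_eq]
    have h1 : Real.log ‖H ζ‖ * (w.re / 2)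
        ≤ Real.log (Y ^ 2 / 2) * (w.re / 2) := by
      apply mul_le_mul_of_nonpos_right (Real.log_le_log h2 habs') (by linarith)
    have h2' : -(H ζ).arg * (w.im / 2) ≤ π / 2 * |w.im| := by
      calc -(H ζ).arg * (w.im / 2) ≤ |(-(H ζ).arg * (w.im / 2))| := le_abs_self _
        _ = |(H ζ).arg| * (|w.im| / 2) := by
            rw [abs_mul, abs_neg, abs_div]; simp
        _ ≤ π * (|w.im| / 2) := by
            apply mul_le_mul_of_nonneg_right (Complex.abs_arg_le_pi _) (by positivity)
        _ = π / 2 * |w.im| := by ring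
    calc Real.exp (Real.log ‖H ζ‖ * (w.re / 2) - (H ζ).arg * (w.im / 2))
        ≤ Real.exp (Real.log (Y ^ 2 / 2) * (w.re / 2) + π / 2 * |w.im|) := by
          apply Real.exp_le_exp.mpr; have := h2'; linarith
      _ = (Y ^ 2 / 2) ^ (w.re / 2) * Real.exp (π / 2 * |w.im|) := by
          rw [Real.exp_add, Real.rpow_def_of_pos h2]
      _ ≤ Real.sqrt 2 * Y ^ w.re * Real.exp (π / 2 * |w.im|) := by
          apply mul_le_mul_of_nonneg_right _ (Real.exp_pos _).le
          have hsplit : (Y ^ 2 / 2 : ℝ) ^ (w.re / 2)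
              = (Y ^ 2) ^ (w.re / 2) * ((2:ℝ) ^ (-(w.re / 2))) := by
            rw [div_eq_mul_inv, Real.mul_rpow (by positivity) (by positivity),
              ← Real.rpow_neg_one, ← Real.rpow_mul (by norm_num : (0:ℝ) ≤ 2)]
            norm_num
          rw [hsplit]
          have hy2 : ((Y:ℝ) ^ 2) ^ (w.re / 2) = Y ^ w.re := by
            rw [← Real.rpow_natCast Y 2, ← Real.rpow_mul hY0.le]
            congr 1; push_cast; ring
          rw [hy2]
          have h2pow : ((2:ℝ)) ^ (-(w.re / 2)) ≤ Real.sqrt 2 := by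
            rw [show Real.sqrt 2 = (2:ℝ) ^ ((1:ℝ)/2) from Real.sqrt_eq_rpow 2]
            exact Real.rpow_le_rpow_of_exponent_le (by norm_num) (by linarith)
          calc Y ^ w.re * (2:ℝ) ^ (-(w.re / 2)) ≤ Y ^ w.re * Real.sqrt 2 := by
                apply mul_le_mul_of_nonneg_left h2pow (by positivity)
            _ = Real.sqrt 2 * Y ^ w.re := by ring
      _ = M := by rw [hM]; ring
  set R₀ : ℝ≥0 := ⟨R, hR0.le⟩ with hR₀
  have hRcoe : ((R₀ : ℝ≥0) : ℝ) = R := rfl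
  have hGdiff : DifferentiableOn ℂ G (closedBall 0 (R₀ : ℝ)) := by
    intro ζ hζ
    exact (hGdiffAt ζ (by simpa [hRcoe] using mem_closedBall_zero_iff.mp hζ)
      ).differentiableWithinAt
  have hFP : HasFPowerSeriesOnBall G (cauchyPowerSeries G 0 (R₀ : ℝ)) 0 R₀ :=
    hGdiff.hasFPowerSeriesOnBall (by exact_mod_cast hR0)
  set p : FormalMultilinearSeries ℂ ℂ ℂ := cauchyPowerSeries G 0 (R₀ : ℝ) with hp
  set a : ℕ → ℂ := fun j => p.coeff j with ha
  have hGc : Continuous fun θ : ℝ => ‖G (circleMap 0 R θ)‖ := by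
    rw [continuous_iff_continuousAt]
    intro θ
    have habs' : ‖circleMap 0 R θ‖ ≤ R := by
      rw [norm_circleMap_zero, abs_of_pos hR0]
    exact (((hGdiffAt _ habs').continuousAt).comp
      ((continuous_circleMap 0 R).continuousAt)).norm
  have hacoeff : ∀ j : ℕ, ‖a j‖ ≤ M * (4 * X / Y) ^ j := by
    intro j
    have h1 : ‖a j‖ ≤ ‖p j‖ :=
      le_of_eq (FormalMultilinearSeries.norm_apply_eq_norm_coef).symm
    have h2 := norm_cauchyPowerSeries_le G 0 (R₀ : ℝ) j
    rw [hRcoe] at h2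
    have hInt : (∫ θ : ℝ in (0)..(2 * π), ‖G (circleMap 0 R θ)‖) ≤ 2 * π * M := by
      have hle : (∫ θ : ℝ in (0)..(2 * π), ‖G (circleMap 0 R θ)‖)
          ≤ ∫ _ : ℝ in (0)..(2 * π), M := by
        apply intervalIntegral.integral_mono_on Real.two_pi_pos.le
          (hGc.intervalIntegrable _ _) (intervalIntegrable_const)
        intro θ _
        apply hGbound
        rw [norm_circleMap_zero, abs_of_pos hR0]
      refine hle.trans (le_of_eq ?_)
      rw [intervalIntegral.integral_const, smul_eq_mul]
      ring
    have hRinv : |R|⁻¹ = 4 * X / Y := by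
      rw [abs_of_pos hR0, hR]
      field_simp
    calc ‖a j‖ ≤ ‖p j‖ := h1
      _ ≤ ((2 * π)⁻¹ * ∫ θ : ℝ in (0)..(2 * π), ‖G (circleMap 0 R θ)‖) * |R|⁻¹ ^ j := h2
      _ ≤ ((2 * π)⁻¹ * (2 * π * M)) * |R|⁻¹ ^ j := by
          have h3 := mul_le_mul_of_nonneg_left hInt (by positivity : (0:ℝ) ≤ (2 * π)⁻¹)
          exact mul_le_mul_of_nonneg_right h3 (by positivity)
      _ = M * (4 * X / Y) ^ j := by
          rw [hRinv]
          have h4 : (2 * π)⁻¹ * (2 * π * M) = M := by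
            field_simp
          rw [h4]
  set g : ℝ → ℂ := fun s => ((‖s • x - y‖ : ℝ) : ℂ) ^ w with hg
  have hgG : ∀ s : ℝ, |s| ≤ R → g s = G (s : ℂ) := by
    intro s hs
    have hsφ : ‖(s : ℂ)‖ ≤ R := by simpa [Complex.norm_real] using hs
    have hsq : Y ^ 2 / 2 ≤ ‖s • x - y‖ ^ 2 := by
      have h := hre _ hsφ
      rw [hHreal s] at h
      simpa [← Complex.ofReal_pow] using h
    have hpos : 0 < ‖s • x - y‖ := by
      nlinarith [norm_nonneg (s • x - y)]
    have hr0 : ((‖s • x - y‖ : ℝ) : ℂ) ≠ 0 := by exact_mod_cast hpos.ne'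
    rw [hg, hG]
    simp only
    rw [Complex.cpow_def_of_ne_zero hr0, hHreal s]
    rw [← Complex.ofReal_log hpos.le,
      ← Complex.ofReal_log (by positivity : (0:ℝ) ≤ ‖s • x - y‖ ^ 2), Real.log_pow]
    congr 1
    push_cast
    ring
  set q : FormalMultilinearSeries ℝ ℝ ℂ :=
    fun j => ContinuousMultilinearMap.mkPiRing ℝ (Fin j) (a j) with hq
  have hgFP : HasFPowerSeriesOnBall g q 0 R₀ := by
    refine ⟨?_, by exact_mod_cast hR0, ?_⟩
    · apply FormalMultilinearSeries.le_radius_of_bound _ M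
      intro j
      have hqn : ‖q j‖ = ‖a j‖ := ContinuousMultilinearMap.norm_mkPiRing (a j)
      rw [hqn, hRcoe]
      calc ‖a j‖ * R ^ j ≤ (M * (4 * X / Y) ^ j) * R ^ j := by
            gcongr; exact hacoeff j
        _ = M * ((4 * X / Y) * R) ^ j := by rw [mul_pow]; ring
        _ = M := by
            rw [hR, show (4 * X / Y) * (Y / (4 * X)) = 1 by field_simp]
            simp
    · intro s hs
      rw [mem_emetric_ball_zero_iff] at hs
      have hs' : |s| < R := by
        have := ENNReal.coe_lt_coe.mp hs
        simpa [Real.norm_eq_abs, ← NNReal.coe_lt_coe, hRcoe] using this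
      have hsc : (↑s : ℂ) ∈ Metric.eball (0 : ℂ) R₀ := by
        rw [mem_emetric_ball_zero_iff]
        simpa [Complex.nnnorm_real] using hs
      have hsum := hFP.hasSum hsc
      have hfun : (fun j => q j fun _ => s) = fun j => p j fun _ => (↑s : ℂ) := by
        funext j
        show (ContinuousMultilinearMap.mkPiRing ℝ (Fin j) (a j)) (fun _ => s)
          = p j fun _ => (↑s : ℂ)
        rw [ContinuousMultilinearMap.mkPiRing_apply,
          FormalMultilinearSeries.apply_eq_pow_smul_coeff]
        simp [ha, Complex.real_smul, smul_eq_mul]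
      have hval : g (0 + s) = G (0 + (↑s : ℂ)) := by
        rw [zero_add, show ((0:ℂ) + ↑s) = (↑s : ℂ) by ring]
        exact hgG s hs'.le
      rw [hfun, hval]
      exact hsum
  have hiter : ∀ j : ℕ, iteratedDeriv j g 0 = (j.factorial : ℂ) * a j := by
    intro j
    rw [iteratedDeriv_eq_iteratedFDeriv]
    have h := hgFP.factorial_smul (1 : ℝ) j
    rw [← h]
    show (j.factorial : ℕ) • (ContinuousMultilinearMap.mkPiRing ℝ (Fin j) (a j))
      (fun _ => (1:ℝ)) = (j.factorial : ℂ) * a j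
    rw [ContinuousMultilinearMap.mkPiRing_apply]
    simp [nsmul_eq_mul]
  have hsum1 : 8 * X ≤ Y → HasSum a (((‖x - y‖ : ℝ) : ℂ) ^ w) := by
    intro h8
    have hR2 : (2 : ℝ) ≤ R := by
      rw [hR, le_div_iff₀ (by positivity)]
      linarith
    have h1mem : (1 : ℝ) ∈ Metric.eball (0 : ℝ) R₀ := by
      rw [mem_emetric_ball_zero_iff]
      have : (1 : ℝ≥0) < R₀ := by
        rw [← NNReal.coe_lt_coe, hRcoe]
        norm_num
        linarith
      exact_mod_cast this
    have hsum := hgFP.hasSum h1mem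
    have hfun : (fun j => q j fun _ => (1:ℝ)) = a := by
      funext j
      show (ContinuousMultilinearMap.mkPiRing ℝ (Fin j) (a j)) (fun _ => (1:ℝ)) = a j
      rw [ContinuousMultilinearMap.mkPiRing_apply]
      simp
    have hval : g (0 + 1) = ((‖x - y‖ : ℝ) : ℂ) ^ w := by
      rw [zero_add, hg]
      simp only [one_smul]
    rw [hfun, hval] at hsum
    exact hsum
  exact ⟨a, fun j => by simpa [hM] using hacoeff j, hiter, hsum1⟩

lemma iteratedDeriv_const_succ : ∀ (j : ℕ) (c : ℂ),
    iteratedDeriv (j + 1) (fun _ : ℝ => c) 0 = 0 := by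
  intro j
  induction j with
  | zero => intro c; simp [iteratedDeriv_succ']
  | succ k ih =>
    intro c
    rw [iteratedDeriv_succ']
    have h : deriv (fun _ : ℝ => c) = fun _ : ℝ => (0 : ℂ) := by
      funext s; simp
    rw [h]
    exact ih 0

set_option maxHeartbeats 1600000 in
/-- Taylor remainder estimate for the kernel `|x-y|^{-n+z}`. -/
theorem kernel_remainder_estimate (n : ℕ) (hn : 3 ≤ n) (m : ℕ) (hm : 1 ≤ m) :
    ∃ C c : ℝ, 0 < C ∧ 0 < c ∧ ∀ z : ℂ, (n : ℝ) - 1 < z.re → z.re < n →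
      ∀ x y : Euc n, x ≠ y → y ≠ 0 →
      ‖(‖x - y‖ : ℂ) ^ (z - n) -
          ∑ j ∈ Finset.range m, (1 / (j.factorial : ℂ)) *
            iteratedDeriv j (fun s : ℝ => ((‖s • x - y‖ : ℝ) : ℂ) ^ (z - n)) 0‖ ≤
        C * Real.exp (c * |z.im|) * (‖x‖ / ‖y‖) ^ ((m : ℝ) - 1 + n - z.re) *
          ‖x - y‖ ^ (z.re - n) := by
  have hsqrt2 : Real.sqrt 2 ≤ 2 := by
    nlinarith [Real.sq_sqrt (by norm_num : (0:ℝ) ≤ 2), Real.sqrt_nonneg 2]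
  have hm1 : (1:ℝ) ≤ (m:ℝ) := by exact_mod_cast hm
  refine ⟨((m : ℝ) + 2) * 32 ^ (m + n + 6), π, by positivity, Real.pi_pos, ?_⟩
  intro z hz1 hz2 x y hxy hy0
  set C : ℝ := ((m : ℝ) + 2) * 32 ^ (m + n + 6) with hC
  have hC1 : (32:ℝ) ^ (m + 1) ≤ C := by
    calc (32:ℝ) ^ (m+1) ≤ 32 ^ (m+n+6) := pow_le_pow_right₀ (by norm_num) (by omega)
      _ ≤ C := le_mul_of_one_le_left (by positivity) (by linarith)
  set β : ℝ := (m : ℝ) - 1 + (n:ℝ) - z.re with hβ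
  have hβ2 : β ≤ (m:ℝ) := by rw [hβ]; linarith
  have hβ1 : (m:ℝ) - 1 ≤ β := by rw [hβ]; linarith
  have hβ0 : 0 < β := by rw [hβ]; linarith
  have hE1 : (1:ℝ) ≤ Real.exp (π * |z.im|) :=
    Real.one_le_exp (by positivity)
  have hEh : Real.exp (π / 2 * |z.im|) ≤ Real.exp (π * |z.im|) :=
    Real.exp_le_exp.mpr (by nlinarith [abs_nonneg z.im, Real.pi_pos])
  have hE0 : (0:ℝ) < Real.exp (π * |z.im|) := Real.exp_pos _
  by_cases hx0 : x = 0
  · subst hx0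
    have hfconst : (fun s : ℝ => ((‖s • (0 : Euc n) - y‖ : ℝ) : ℂ) ^ (z - n))
        = fun _ : ℝ => ((‖y‖ : ℝ) : ℂ) ^ (z - n) := by
      funext s; rw [smul_zero, zero_sub, norm_neg]
    rw [hfconst]
    have hsum0 : ∑ j ∈ Finset.range m, (1 / (j.factorial : ℂ)) *
        iteratedDeriv j (fun _ : ℝ => ((‖y‖ : ℝ) : ℂ) ^ (z - n)) 0
        = ((‖y‖ : ℝ) : ℂ) ^ (z - n) := by
      rw [Finset.sum_eq_single_of_mem 0 (Finset.mem_range.mpr (by omega))]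
      · simp
      · intro b _ hb
        obtain ⟨k, rfl⟩ := Nat.exists_eq_succ_of_ne_zero hb
        rw [iteratedDeriv_const_succ k _]
        simp
    rw [hsum0]
    have h0y : (0 : Euc n) - y = -y := zero_sub y
    rw [h0y, norm_neg, norm_zero, sub_self, norm_zero, zero_div,
      Real.zero_rpow hβ0.ne']
    have : C * Real.exp (π * |z.im|) * 0 * ‖y‖ ^ (z.re - (n:ℝ)) = 0 := by ring
    rw [this]
  · -- x ≠ 0
    have hx0' : 0 < ‖x‖ := norm_pos_iff.mpr hx0
    have hy0' : 0 < ‖y‖ := norm_pos_iff.mpr hy0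
    have hxy' : 0 < ‖x - y‖ := norm_pos_iff.mpr (sub_ne_zero.mpr hxy)
    have hwre : (z - (n:ℂ)).re = z.re - n := by simp
    have hwim : (z - (n:ℂ)).im = z.im := by simp
    obtain ⟨a, hab, hiter, hsum⟩ := kernel_core x y hx0 hy0 (z - n)
      (by rw [hwre]; linarith) (by rw [hwre]; linarith)
    simp only [hwre, hwim] at hab
    have hsum_eq : ∀ j ∈ Finset.range m, (1 / (j.factorial : ℂ)) *
        iteratedDeriv j (fun s : ℝ => ((‖s • x - y‖ : ℝ) : ℂ) ^ (z - n)) 0 = a j := by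
      intro j _
      rw [hiter j, ← mul_assoc,
        one_div_mul_cancel (Nat.cast_ne_zero.mpr j.factorial_ne_zero), one_mul]
    rw [Finset.sum_congr rfl hsum_eq]
    have hgnorm : ‖((‖x - y‖ : ℝ) : ℂ) ^ (z - (n:ℂ))‖ = ‖x - y‖ ^ (z.re - (n:ℝ)) := by
      rw [Complex.norm_cpow_eq_rpow_re_of_pos hxy', hwre]
    set t : ℝ := ‖x‖ / ‖y‖ with htdef
    have ht0 : 0 < t := by positivity
    have h4t : 4 * ‖x‖ / ‖y‖ = 4 * t := by rw [htdef]; ring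
    have hD0 : (0:ℝ) < ‖x - y‖ ^ (z.re - (n:ℝ)) := Real.rpow_pos_of_pos hxy' _
    have hT0 : (0:ℝ) < t ^ β := Real.rpow_pos_of_pos ht0 _
    by_cases hle : 8 * ‖x‖ ≤ ‖y‖
    · -- small x case
      have hs := hsum hle
      have ht18 : t ≤ 1/8 := by rw [htdef, div_le_div_iff₀ hy0' (by norm_num)]; linarith
      have hu2 : 4 * t ≤ 1/2 := by linarith
      have hu0 : 0 ≤ 4 * t := by positivity
      have htail_eq : ((‖x - y‖ : ℝ) : ℂ) ^ (z - (n:ℂ)) - ∑ j ∈ Finset.range m, a j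
          = ∑' i, a (i + m) := by
        have h := Summable.sum_add_tsum_nat_add m hs.summable
        rw [hs.tsum_eq] at h
        rw [← h]; ring
      rw [htail_eq]
      set M' : ℝ := Real.sqrt 2 * Real.exp (π/2 * |z.im|) * ‖y‖ ^ (z.re - (n:ℝ)) with hM'
      have hsq20 : (0:ℝ) < Real.sqrt 2 := by positivity
      have hM'0 : 0 < M' := by rw [hM']; positivity
      have hgeo : HasSum (fun i : ℕ => (M' * (4*t)^m) * (1/2)^i) ((M' * (4*t)^m) * 2) := by
        have := hasSum_geometric_two
        exact this.mul_left _
      have hLHS : ‖∑' i, a (i + m)‖ ≤ (M' * (4*t)^m) * 2 := by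
        apply tsum_of_norm_bounded hgeo
        intro i
        calc ‖a (i+m)‖ ≤ M' * (4 * ‖x‖ / ‖y‖)^(i+m) := hab (i+m)
          _ = (M' * (4*t)^m) * (4*t)^i := by rw [h4t, pow_add]; ring
          _ ≤ (M' * (4*t)^m) * (1/2)^i := by
              exact mul_le_mul_of_nonneg_left (pow_le_pow_left₀ hu0 hu2 i) (by positivity)
      refine hLHS.trans ?_
      have ht1 : t ≤ 1 := by linarith
      have htm : t ^ m ≤ t ^ β := by
        rw [← Real.rpow_natCast t m]
        exact Real.rpow_le_rpow_of_exponent_ge ht0 ht1 hβ2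
      have hxy2 : ‖x - y‖ ≤ 2 * ‖y‖ := by
        have h := norm_sub_le x y
        linarith
      have hYD : ‖y‖ ^ (z.re - (n:ℝ)) ≤ 2 * ‖x - y‖ ^ (z.re - (n:ℝ)) := by
        have h1 : (2 * ‖y‖) ^ (z.re - (n:ℝ)) ≤ ‖x - y‖ ^ (z.re - (n:ℝ)) :=
          Real.rpow_le_rpow_of_nonpos hxy' hxy2 (by linarith)
        have h2 : ‖y‖ ^ (z.re - (n:ℝ))
            = 2 ^ (-(z.re - (n:ℝ))) * (2*‖y‖) ^ (z.re - (n:ℝ)) := by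
          rw [Real.mul_rpow (by norm_num) hy0'.le, ← mul_assoc,
            ← Real.rpow_add (by norm_num : (0:ℝ) < 2)]
          simp
        have h3 : (2:ℝ) ^ (-(z.re - (n:ℝ))) ≤ 2 := by
          calc (2:ℝ) ^ (-(z.re - (n:ℝ))) ≤ 2 ^ (1:ℝ) :=
                Real.rpow_le_rpow_of_exponent_le one_le_two (by linarith)
            _ = 2 := Real.rpow_one 2
        calc ‖y‖ ^ (z.re - (n:ℝ)) = 2 ^ (-(z.re - (n:ℝ))) * (2*‖y‖) ^ (z.re - (n:ℝ)) := h2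
          _ ≤ 2 * ‖x - y‖ ^ (z.re - (n:ℝ)) :=
              mul_le_mul h3 h1 (by positivity) (by norm_num)
      calc M' * (4*t)^m * 2
          = 2 * Real.sqrt 2 * 4^m * Real.exp (π/2*|z.im|) * (‖y‖ ^ (z.re - (n:ℝ)))
            * t^m := by rw [hM', mul_pow]; ring
        _ ≤ 2 * 2 * 4^m * Real.exp (π*|z.im|) * (2 * ‖x - y‖ ^ (z.re - (n:ℝ)))
            * t^β := by
            gcongr
        _ = (8 * 4^m) * Real.exp (π*|z.im|) * t^β * ‖x - y‖ ^ (z.re - (n:ℝ)) := by ring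
        _ ≤ C * Real.exp (π*|z.im|) * t^β * ‖x - y‖ ^ (z.re - (n:ℝ)) := by
            have hnum : (8:ℝ) * 4^m ≤ C := by
              calc (8:ℝ) * 4^m ≤ 32 * 32^m := by
                    have h1 : (4:ℝ)^m ≤ 32^m := pow_le_pow_left₀ (by norm_num) (by norm_num) m
                    nlinarith [pow_nonneg (show (0:ℝ) ≤ 4 by norm_num) m]
                _ = 32^(m+1) := by rw [pow_succ]; ring
                _ ≤ C := hC1
            gcongr
    · -- large x case
      push_neg at hle
      have hlt : 1 ≤ 8 * t := by
        rw [htdef]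
        rw [show (8:ℝ) * (‖x‖/‖y‖) = 8*‖x‖/‖y‖ by ring, le_div_iff₀ hy0']
        linarith
      have h18t : (1/8 : ℝ) ≤ t := by linarith
      have hT8 : 1 ≤ 8^m * t ^ β := by
        rcases le_or_gt 1 t with h | h
        · have h1 : 1 ≤ t ^ β := Real.one_le_rpow h hβ0.le
          have h2 : (1:ℝ) ≤ 8^m := one_le_pow₀ (by norm_num)
          nlinarith
        · have h1 : (1/8:ℝ) ^ (m:ℝ) ≤ t ^ β := by
            calc (1/8:ℝ) ^ (m:ℝ) ≤ t ^ (m:ℝ) :=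
                  Real.rpow_le_rpow (by norm_num) h18t (by positivity)
              _ ≤ t ^ β := Real.rpow_le_rpow_of_exponent_ge ht0 h.le hβ2
          have h2 : (8:ℝ)^m * (1/8:ℝ) ^ (m:ℝ) = 1 := by
            rw [Real.rpow_natCast, ← mul_pow]
            norm_num
          calc (1:ℝ) = 8^m * (1/8:ℝ) ^ (m:ℝ) := h2.symm
            _ ≤ 8^m * t ^ β := by
                exact mul_le_mul_of_nonneg_left h1 (by positivity)
      have hterm : ∀ j ∈ Finset.range m, ‖a j‖ ≤
          (18 * 4^m * 8^m) * Real.exp (π*|z.im|) * t ^ β * ‖x - y‖ ^ (z.re - (n:ℝ)) := by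
        intro j hj
        have hjm : (j:ℝ) ≤ (m:ℝ) - 1 := by
          have h := Finset.mem_range.mp hj
          have h' : (j:ℝ) + 1 ≤ (m:ℝ) := by exact_mod_cast h
          linarith
        have h9 : ‖x - y‖ ≤ 9 * t * ‖y‖ := by
          have h1 := norm_sub_le x y
          have hXt : ‖x‖ = t * ‖y‖ := by rw [htdef]; field_simp
          nlinarith [hy0']
        have hD9 : (9 * t * ‖y‖) ^ (z.re - (n:ℝ)) ≤ ‖x - y‖ ^ (z.re - (n:ℝ)) :=
          Real.rpow_le_rpow_of_nonpos hxy' h9 (by linarith)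
        have hYe : ‖y‖ ^ (z.re - (n:ℝ))
            ≤ (9*t) ^ ((n:ℝ) - z.re) * ‖x - y‖ ^ (z.re - (n:ℝ)) := by
          have h2 : ‖y‖ ^ (z.re - (n:ℝ))
              = (9*t) ^ ((n:ℝ) - z.re) * (9*t*‖y‖) ^ (z.re - (n:ℝ)) := by
            rw [Real.mul_rpow (by positivity) hy0'.le, ← mul_assoc,
              ← Real.rpow_add (by positivity : (0:ℝ) < 9*t)]
            simp
          rw [h2]
          exact mul_le_mul_of_nonneg_left hD9 (by positivity)
        have h9t : (9*t) ^ ((n:ℝ) - z.re) ≤ 9 * t ^ ((n:ℝ) - z.re) := by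
          rw [Real.mul_rpow (by norm_num) ht0.le]
          have h3 : (9:ℝ) ^ ((n:ℝ) - z.re) ≤ 9 := by
            calc (9:ℝ) ^ ((n:ℝ) - z.re) ≤ 9 ^ (1:ℝ) :=
                  Real.rpow_le_rpow_of_exponent_le (by norm_num) (by linarith)
              _ = 9 := Real.rpow_one 9
          exact mul_le_mul_of_nonneg_right h3 (by positivity)
        have hkey : t ^ (j:ℕ) * t ^ ((n:ℝ) - z.re) ≤ 8^m * t ^ β := by
          rw [← Real.rpow_natCast t j, ← Real.rpow_add ht0]
          have hδ : (j:ℝ) + ((n:ℝ) - z.re) = β + (-(((m:ℝ) - 1) - j)) := by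
            rw [hβ]; ring
          rw [hδ, Real.rpow_add ht0]
          have h4 : t ^ (-(((m:ℝ) - 1) - j)) ≤ (1/8:ℝ) ^ (-(((m:ℝ) - 1) - j)) :=
            Real.rpow_le_rpow_of_nonpos (by norm_num) h18t (by linarith)
          have h5 : (1/8:ℝ) ^ (-(((m:ℝ) - 1) - j)) ≤ 8^m := by
            rw [one_div, Real.inv_rpow (by norm_num : (0:ℝ) ≤ 8),
              ← Real.rpow_neg (by norm_num : (0:ℝ) ≤ 8), neg_neg]
            calc (8:ℝ) ^ (((m:ℝ) - 1) - j) ≤ 8 ^ ((m:ℝ)) :=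
                  Real.rpow_le_rpow_of_exponent_le (by norm_num) (by linarith)
              _ = 8^m := Real.rpow_natCast 8 m
          calc t ^ β * t ^ (-(((m:ℝ) - 1) - j)) ≤ t ^ β * (8^m) :=
                mul_le_mul_of_nonneg_left (h4.trans h5) hT0.le
            _ = 8^m * t ^ β := by ring
        have h4j : (4:ℝ)^j ≤ 4^m :=
          pow_le_pow_right₀ (by norm_num) (Finset.mem_range.mp hj).le
        calc ‖a j‖ ≤ Real.sqrt 2 * Real.exp (π/2*|z.im|) * ‖y‖ ^ (z.re - (n:ℝ))
              * (4 * ‖x‖ / ‖y‖) ^ j := hab j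
          _ = Real.sqrt 2 * Real.exp (π/2*|z.im|) * ‖y‖ ^ (z.re - (n:ℝ))
              * (4^j * t^j) := by rw [h4t, mul_pow]
          _ ≤ 2 * Real.exp (π*|z.im|)
              * ((9*t) ^ ((n:ℝ) - z.re) * ‖x - y‖ ^ (z.re - (n:ℝ)))
              * (4^m * t^j) := by gcongr
          _ ≤ 2 * Real.exp (π*|z.im|)
              * ((9 * t ^ ((n:ℝ) - z.re)) * ‖x - y‖ ^ (z.re - (n:ℝ)))
              * (4^m * t^j) := by gcongr
          _ = (2 * 9 * 4^m) * Real.exp (π*|z.im|) * ‖x - y‖ ^ (z.re - (n:ℝ))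
              * (t^j * t ^ ((n:ℝ) - z.re)) := by ring
          _ ≤ (2 * 9 * 4^m) * Real.exp (π*|z.im|) * ‖x - y‖ ^ (z.re - (n:ℝ))
              * (8^m * t ^ β) := by
              exact mul_le_mul_of_nonneg_left hkey (by positivity)
          _ = (18 * 4^m * 8^m) * Real.exp (π*|z.im|) * t ^ β
              * ‖x - y‖ ^ (z.re - (n:ℝ)) := by ring
      have hg1 : ‖((‖x - y‖ : ℝ) : ℂ) ^ (z - (n:ℂ))‖
          ≤ 8^m * Real.exp (π*|z.im|) * t ^ β * ‖x - y‖ ^ (z.re - (n:ℝ)) := by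
        rw [hgnorm]
        calc ‖x - y‖ ^ (z.re - (n:ℝ))
            ≤ (8^m * t ^ β) * ‖x - y‖ ^ (z.re - (n:ℝ)) := le_mul_of_one_le_left hD0.le hT8
          _ = 8^m * 1 * t ^ β * ‖x - y‖ ^ (z.re - (n:ℝ)) := by ring
          _ ≤ 8^m * Real.exp (π*|z.im|) * t ^ β * ‖x - y‖ ^ (z.re - (n:ℝ)) := by gcongr
      have hsb : ‖∑ j ∈ Finset.range m, a j‖ ≤ (m:ℝ) *
          ((18 * 4^m * 8^m) * Real.exp (π*|z.im|) * t ^ β * ‖x - y‖ ^ (z.re - (n:ℝ))) := by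
        calc ‖∑ j ∈ Finset.range m, a j‖ ≤ ∑ j ∈ Finset.range m, ‖a j‖ := norm_sum_le _ _
          _ ≤ ∑ _j ∈ Finset.range m,
              ((18 * 4^m * 8^m) * Real.exp (π*|z.im|) * t ^ β
                * ‖x - y‖ ^ (z.re - (n:ℝ))) := Finset.sum_le_sum hterm
          _ = (m:ℝ) * ((18 * 4^m * 8^m) * Real.exp (π*|z.im|) * t ^ β
                * ‖x - y‖ ^ (z.re - (n:ℝ))) := by
              rw [Finset.sum_const, Finset.card_range, nsmul_eq_mul]
      have hnum : (8:ℝ)^m + (m:ℝ) * (18 * 4^m * 8^m) ≤ C := by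
        have h48 : (18:ℝ) * 4^m * 8^m = 18 * 32^m := by
          rw [mul_assoc, ← mul_pow]; norm_num
        have h8 : (8:ℝ)^m ≤ 32^m := pow_le_pow_left₀ (by norm_num) (by norm_num) m
        have h32 : (32:ℝ)^(m+1) ≤ 32^(m+n+6) := pow_le_pow_right₀ (by norm_num) (by omega)
        have h320 : (0:ℝ) < 32^m := by positivity
        calc (8:ℝ)^m + (m:ℝ) * (18 * 4^m * 8^m)
            = 8^m + (m:ℝ) * (18 * 32^m) := by rw [h48]
          _ ≤ 32^m + (m:ℝ) * (18 * 32^m) := by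
              exact add_le_add_left h8 _
          _ = (1 + 18*(m:ℝ)) * 32^m := by ring
          _ ≤ (32 * ((m:ℝ)+2)) * 32^m := by nlinarith
          _ = ((m:ℝ)+2) * 32^(m+1) := by rw [pow_succ]; ring
          _ ≤ C := by
              rw [hC]
              exact mul_le_mul_of_nonneg_left h32 (by linarith)
      calc ‖((‖x - y‖ : ℝ) : ℂ) ^ (z - (n:ℂ)) - ∑ j ∈ Finset.range m, a j‖
          ≤ ‖((‖x - y‖ : ℝ) : ℂ) ^ (z - (n:ℂ))‖ + ‖∑ j ∈ Finset.range m, a j‖ :=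
            norm_sub_le _ _
        _ ≤ (8^m * Real.exp (π*|z.im|) * t ^ β * ‖x - y‖ ^ (z.re - (n:ℝ)))
            + (m:ℝ) * ((18 * 4^m * 8^m) * Real.exp (π*|z.im|) * t ^ β
              * ‖x - y‖ ^ (z.re - (n:ℝ))) := add_le_add hg1 hsb
        _ = ((8:ℝ)^m + (m:ℝ) * (18 * 4^m * 8^m))
            * (Real.exp (π*|z.im|) * t ^ β * ‖x - y‖ ^ (z.re - (n:ℝ))) := by ring
        _ ≤ C * (Real.exp (π*|z.im|) * t ^ β * ‖x - y‖ ^ (z.re - (n:ℝ))) := by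
            exact mul_le_mul_of_nonneg_right hnum (by positivity)
        _ = C * Real.exp (π*|z.im|) * t ^ β * ‖x - y‖ ^ (z.re - (n:ℝ)) := by ring
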